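/- Let H be a subgroup of a group A, let φ : H → A be a group monomorphism, and let G = A∗_φ be the HNN extension with stable letter t. Let X be an A-graph, and let x, y be vertices of X in different A-orbits such that the A-stabilizer of x is H and the A-stabilizer of y is φ(H). Let Z be the φ-coalescence of the G-graph G×_A X with respect to (x,y). If X is a connected graph, then Z is a connected graph. -/

import Mathlib

/-! ### The induced `G`-set `G ×_A S` along a homomorphism `A →* G` -/

/-- The relation defining `G ×_A S` along `ι : A →* G`: `(g · ι a, s) ~ (g, a • s)`. -/
def IndRelH {A G : Type*} [Group A] [Group G] (ι : A →* G) (S : Type*) [MulAction A S] :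
    G × S → G × S → Prop :=
  fun p q => ∃ a : A, p.1 = q.1 * ι a ∧ q.2 = a • p.2

/-- The induced `G`-set `G ×_A S` along `ι : A →* G`. -/
def IndSetH {A G : Type*} [Group A] [Group G] (ι : A →* G) (S : Type*) [MulAction A S] :
    Type _ :=
  Quot (IndRelH ι S)

/-- The class of a pair `(g, s)` in `G ×_A S`. -/
def IndSetH.mk {A G : Type*} [Group A] [Group G] (ι : A →* G) (S : Type*) [MulAction A S]
    (p : G × S) : IndSetH ι S :=
  Quot.mk _ p

instance {A G : Type*} [Group A] [Group G] (ι : A →* G) (S : Type*) [MulAction A S] :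
    SMul G (IndSetH ι S) :=
  ⟨fun g => Quot.map (fun p => (g * p.1, p.2)) (by
    rintro p q ⟨a, h1, h2⟩
    exact ⟨a, by dsimp only; rw [h1, mul_assoc], h2⟩)⟩

/-- `G` acts on `G ×_A S` by left multiplication on the first factor. -/
instance {A G : Type*} [Group A] [Group G] (ι : A →* G) (S : Type*) [MulAction A S] :
    MulAction G (IndSetH ι S) where
  one_smul := by
    rintro ⟨p⟩
    show IndSetH.mk ι S (1 * p.1, p.2) = IndSetH.mk ι S p
    rw [one_mul]
  mul_smul g h := by
    rintro ⟨p⟩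
    show IndSetH.mk ι S (g * h * p.1, p.2) = IndSetH.mk ι S (g * (h * p.1), p.2)
    rw [mul_assoc]

/-! ### The HNN extension `A∗_φ` of `A` along a monomorphism `φ : H → A` -/

section HNN

variable {A : Type*} [Group A] (H : Subgroup A) (φ : ↥H →* A) (hφ : Function.Injective φ)

/-- The HNN extension `A∗_φ = ⟨A, t ∣ t h t⁻¹ = φ(h) for h ∈ H⟩` of `A` along the
monomorphism `φ : H → A`. -/
noncomputable abbrev HNNGroup : Type _ :=
  HNNExtension A H φ.range (MonoidHom.ofInjective hφ)

/-! ### The `φ`-coalescence -/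

variable (X : Type*) [MulAction A X]

/-- The identifications defining the `φ`-coalescence of `X` with respect to `(x, y)`:
for every `g ∈ G = A∗_φ`, the point `g t • ι x` is glued to `g • ι y` in `G ×_A X`. -/
def CoalRel (x y : X) :
    IndSetH (HNNExtension.of : A →* HNNGroup H φ hφ) X →
    IndSetH (HNNExtension.of : A →* HNNGroup H φ hφ) X → Prop :=
  fun u v => ∃ g : HNNGroup H φ hφ,
    u = IndSetH.mk _ X (g * HNNExtension.t, x) ∧ v = IndSetH.mk _ X (g, y)

/-- The `φ`-coalescence of the `A`-set `X` with respect to `(x, y)`: the quotient of the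
induced `G`-set `G ×_A X` by the relation generated by `g t • ι x ~ g • ι y`. -/
def CoalSet (x y : X) : Type _ :=
  Quot (CoalRel H φ hφ X x y)

/-- The quotient `G`-map `ρ : G ×_A X → Z`. -/
def CoalSet.rho (x y : X)
    (u : IndSetH (HNNExtension.of : A →* HNNGroup H φ hφ) X) : CoalSet H φ hφ X x y :=
  Quot.mk _ u

noncomputable instance (x y : X) : SMul (HNNGroup H φ hφ) (CoalSet H φ hφ X x y) :=
  ⟨fun g => Quot.map (fun u => g • u) (by
    rintro u v ⟨h, rfl, rfl⟩
    refine ⟨g * h, ?_, rfl⟩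
    show IndSetH.mk _ X (g * (h * HNNExtension.t), x) =
      IndSetH.mk _ X (g * h * HNNExtension.t, x)
    rw [mul_assoc])⟩

/-- The group `G = A∗_φ` acts on the `φ`-coalescence. -/
noncomputable instance (x y : X) : MulAction (HNNGroup H φ hφ) (CoalSet H φ hφ X x y) where
  one_smul := by
    rintro ⟨u⟩
    show CoalSet.rho H φ hφ X x y ((1 : HNNGroup H φ hφ) • u) = CoalSet.rho H φ hφ X x y u
    rw [one_smul]
  mul_smul g h := by
    rintro ⟨u⟩
    show CoalSet.rho H φ hφ X x y ((g * h) • u) = CoalSet.rho H φ hφ X x y (g • h • u)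
    rw [mul_smul]

/-- The canonical `A`-map `ȷ : X → Z`, the composition of `ι : X → G ×_A X` with `ρ`. -/
noncomputable def CoalSet.incl (x y : X) (s : X) : CoalSet H φ hφ X x y :=
  CoalSet.rho H φ hφ X x y (IndSetH.mk _ X (1, s))

/-- The distinguished point `z = ρ (ι y)` of the `φ`-coalescence. -/
noncomputable def CoalSet.basePt (x y : X) : CoalSet H φ hφ X x y :=
  CoalSet.incl H φ hφ X x y y

end HNN

/-! ### The `φ`-coalescence of a graph -/

section CoalGraph

variable {A : Type*} [Group A] (H : Subgroup A) (φ : ↥H →* A) (hφ : Function.Injective φ)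
  {VX : Type*} [MulAction A VX]

/-- The adjacency relation of the `φ`-coalescence of an `A`-graph `X`: the edges are the
images of the edges of `G ×_A X` under the quotient map `ρ`. -/
def CoalAdj (X : SimpleGraph VX) (x y : VX) :
    CoalSet H φ hφ VX x y → CoalSet H φ hφ VX x y → Prop :=
  fun u v => ∃ (g : HNNGroup H φ hφ) (a b : VX), X.Adj a b ∧
    u = CoalSet.rho H φ hφ VX x y (IndSetH.mk _ VX (g, a)) ∧
    v = CoalSet.rho H φ hφ VX x y (IndSetH.mk _ VX (g, b))

/-- The `φ`-coalescence of the `A`-graph `X` with respect to `(x, y)`, as a graph. -/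
def CoalGraph (X : SimpleGraph VX) (x y : VX) :
    SimpleGraph (CoalSet H φ hφ VX x y) :=
  SimpleGraph.fromRel (CoalAdj H φ hφ X x y)

end CoalGraph

/-- Let `H ≤ A`, `φ : H → A` a monomorphism, `G = A∗_φ`.  Let `X` be an
`A`-graph and `x, y` vertices in different `A`-orbits with `A_x = H` and `A_y = φ(H)`.
If `X` is connected then the `φ`-coalescence `Z` of `G ×_A X` w.r.t. `(x, y)` is a
connected graph. -/
theorem coalescence_connected
    {A : Type*} [Group A] (H : Subgroup A) (φ : ↥H →* A) (hφ : Function.Injective φ)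
    {VX : Type*} [MulAction A VX] (X : SimpleGraph VX)
    (hX : ∀ (g : A) (a b : VX), X.Adj a b → X.Adj (g • a) (g • b))
    (x y : VX)
    (horb : y ∉ MulAction.orbit A x)
    (hsx : MulAction.stabilizer A x = H)
    (hsy : MulAction.stabilizer A y = φ.range) :
    X.Connected → (CoalGraph H φ hφ X x y).Connected := by
  intro hconn
  set G := HNNGroup H φ hφ with hG
  set Z := CoalGraph H φ hφ X x y with hZ
  set ρ : G × VX → CoalSet H φ hφ VX x y :=
    fun p => CoalSet.rho H φ hφ VX x y (IndSetH.mk _ VX p) with hρ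
  -- the action of `g` is a graph automorphism of `Z`
  have smul_rho : ∀ (g h : G) (s : VX), g • ρ (h, s) = ρ (g * h, s) := fun _ _ _ => rfl
  have adj_smul : ∀ (g : G) (u v : CoalSet H φ hφ VX x y), Z.Adj u v → Z.Adj (g • u) (g • v) := by
    rintro g u v ⟨hne, hor⟩
    refine ⟨fun h => hne (smul_left_cancel g h), ?_⟩
    rcases hor with ⟨h, a, b, hab, rfl, rfl⟩ | ⟨h, a, b, hab, rfl, rfl⟩
    · exact Or.inl ⟨g * h, a, b, hab, rfl, rfl⟩
    · exact Or.inr ⟨g * h, a, b, hab, rfl, rfl⟩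
  have reach_smul : ∀ (g : G) (u v : CoalSet H φ hφ VX x y),
      Z.Reachable u v → Z.Reachable (g • u) (g • v) := by
    intro g u v h
    exact h.map (⟨fun w => g • w, fun h' => adj_smul g _ _ h'⟩ : Z →g Z)
  -- within a fiber, all points are mutually reachable
  have fiber : ∀ (g : G) (s s' : VX), Z.Reachable (ρ (g, s)) (ρ (g, s')) := by
    intro g s s'
    obtain ⟨w⟩ := hconn.preconnected s s'
    induction w with
    | nil => exact SimpleGraph.Reachable.refl _
    | @cons a b c h p ih =>
      refine SimpleGraph.Reachable.trans ?_ ih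
      by_cases he : ρ (g, a) = ρ (g, b)
      · rw [he]
      · exact SimpleGraph.Adj.reachable ⟨he, Or.inl ⟨g, a, b, h, rfl, rfl⟩⟩
  -- moving along `of a`
  have of_eq : ∀ (g : G) (a : A) (s : VX),
      ρ (g * HNNExtension.of a, s) = ρ (g, a • s) := by
    intro g a s
    exact congrArg (CoalSet.rho H φ hφ VX x y)
      (Quot.sound ⟨a, rfl, rfl⟩)
  -- the gluing relation
  have t_eq : ∀ g : G, ρ (g * HNNExtension.t, x) = ρ (g, y) := fun g =>
    Quot.sound ⟨g, rfl, rfl⟩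
  -- main reachability claim
  have main : ∀ g : G, Z.Reachable (ρ (1, y)) (ρ (g, y)) := by
    intro g
    induction g using HNNExtension.induction_on with
    | of a =>
      rw [show (HNNExtension.of a : G) = 1 * HNNExtension.of a by rw [one_mul], of_eq]
      exact fiber 1 y (a • y)
    | t =>
      have := t_eq (1 : G)
      rw [one_mul] at this
      rw [← this]
      exact fiber HNNExtension.t x y
    | mul g h hg hh =>
      refine hg.trans ?_
      have := reach_smul g _ _ hh
      rw [smul_rho, smul_rho, mul_one] at this
      exact this
    | inv g hg =>
      have := reach_smul g⁻¹ _ _ hg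
      rw [smul_rho, smul_rho, mul_one, inv_mul_cancel] at this
      exact this.symm
  have surj : ∀ u : CoalSet H φ hφ VX x y, ∃ g s, u = ρ (g, s) := by
    rintro ⟨⟨g, s⟩⟩; exact ⟨g, s, rfl⟩
  have : Nonempty (CoalSet H φ hφ VX x y) := ⟨ρ (1, y)⟩
  refine ⟨fun u v => ?_⟩
  obtain ⟨g, s, rfl⟩ := surj u
  obtain ⟨h, s', rfl⟩ := surj v
  exact ((fiber g s y).trans (main g).symm).trans ((main h).trans (fiber h y s'))
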